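/- arXiv:1006.0190 — 3 statements merged into one kernel-verified Lean document; each statement's English description precedes it below -/
import Mathlib

section
/- Let Y and Z be CAT(0) spaces and equip Y × Z with the ℓ² product metric. Let Δ(a,b,c) be a geodesic triangle in Y × Z satisfying the flatness condition: for all t ∈ (0,1), the points e ∈ [a,b], f ∈ [a,c] with d(a,e)=t·d(a,b), d(a,f)=t·d(a,c) satisfy d(e,f)=t·d(b,c). Then the projected triangles Δ(a₁,b₁,c₁) in Y and Δ(a₂,b₂,c₂) in Z (where subscripts denote coordinates) also satisfy this flatness condition; in particular d(e_i,f_i) = t·d(b_i,c_i) for i = 1,2. -/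
open Filter Set

/-- The Euclidean comparison angle at the vertex with adjacent side lengths `a`, `b`
and opposite side length `c`, given by the law of cosines. -/
noncomputable def compAngle (a b c : ℝ) : ℝ :=
  Real.arccos ((a ^ 2 + b ^ 2 - c ^ 2) / (2 * a * b))

/-- `γ` is a unit-speed geodesic segment from `a` to `b`, parameterized on `[0, dist a b]`. -/
def IsGeodesicSeg {X : Type*} [MetricSpace X] (γ : ℝ → X) (a b : X) : Prop :=
  γ 0 = a ∧ γ (dist a b) = b ∧
    ∀ s ∈ Set.Icc (0 : ℝ) (dist a b), ∀ t ∈ Set.Icc (0 : ℝ) (dist a b),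
      dist (γ s) (γ t) = |s - t|

/-- The distance in the Euclidean comparison triangle (with side lengths
`dab`, `dac`, `dbc`) between the comparison points at parameters `s` (on the side
of length `dab`) and `t` (on the side of length `dac`). -/
noncomputable def compDist (dab dac dbc s t : ℝ) : ℝ :=
  Real.sqrt (s ^ 2 + t ^ 2 - 2 * s * t * Real.cos (compAngle dab dac dbc))

/-- `X` is a CAT(0) space: it is geodesic, and every geodesic triangle satisfies the
CAT(0) comparison inequality (stated for pairs of points on the two sides issuing from
a common vertex, which is equivalent to the usual condition). -/
def IsCAT0 (X : Type*) [MetricSpace X] : Prop :=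
  (∀ a b : X, ∃ γ : ℝ → X, IsGeodesicSeg γ a b) ∧
  ∀ (a b c : X) (α β : ℝ → X), IsGeodesicSeg α a b → IsGeodesicSeg β a c →
    ∀ s ∈ Set.Icc (0 : ℝ) (dist a b), ∀ t ∈ Set.Icc (0 : ℝ) (dist a c),
      dist (α s) (β t) ≤ compDist (dist a b) (dist a c) (dist b c) s t

section Auxiliary

lemma prod_dist_sq {Y Z : Type*} [MetricSpace Y] [MetricSpace Z]
    (p q : WithLp 2 (Y × Z)) :
    dist p q ^ 2 = dist p.ofLp.1 q.ofLp.1 ^ 2 + dist p.ofLp.2 q.ofLp.2 ^ 2 := by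
  have h := WithLp.prod_dist_eq_add (p := 2) (by norm_num) p q
  rw [h, show ((2:ENNReal).toReal) = 2 by norm_num, ← Real.rpow_natCast _ 2,
    ← Real.rpow_mul (by positivity)]
  norm_num

lemma seg_proj_speed {Y Z : Type*} [MetricSpace Y] [MetricSpace Z]
    (f : ℝ → Y) (g : ℝ → Z) (D : ℝ) (hD : 0 ≤ D)
    (h : ∀ u ∈ Icc (0:ℝ) D, ∀ v ∈ Icc (0:ℝ) D,
      dist (f u) (f v) ^ 2 + dist (g u) (g v) ^ 2 = (u - v) ^ 2)
    {u v : ℝ} (hu : u ∈ Icc (0:ℝ) D) (hv : v ∈ Icc (0:ℝ) D) :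
    dist (f u) (f v) * D = |u - v| * dist (f 0) (f D) := by
  rcases eq_or_lt_of_le hD with hD0 | hDpos
  · have hu0 : u = 0 := le_antisymm (hD0 ▸ hu.2) hu.1
    have hv0 : v = 0 := le_antisymm (hD0 ▸ hv.2) hv.1
    simp [hu0, hv0, ← hD0]
  · have h0 : (0:ℝ) ∈ Icc (0:ℝ) D := ⟨le_refl _, hD⟩
    have hDm : D ∈ Icc (0:ℝ) D := ⟨hD, le_refl _⟩
    have hLL' : dist (f 0) (f D) ^ 2 + dist (g 0) (g D) ^ 2 = D ^ 2 := by
      have := h 0 h0 D hDm; nlinarith [this]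
    set L : ℝ := dist (f 0) (f D) with hL
    set L' : ℝ := dist (g 0) (g D) with hL'
    have hLnn : 0 ≤ L := dist_nonneg
    have hL'nn : 0 ≤ L' := dist_nonneg
    clear_value L L'
    -- Step 1: distances from the endpoints are linear
    have key : ∀ w ∈ Icc (0:ℝ) D,
        dist (f 0) (f w) * D = w * L ∧ dist (f w) (f D) * D = (D - w) * L ∧
        dist (g 0) (g w) * D = w * L' ∧ dist (g w) (g D) * D = (D - w) * L' := by
      intro w hw
      have h1 : dist (f 0) (f w) ^ 2 + dist (g 0) (g w) ^ 2 = w ^ 2 := by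
        have := h 0 h0 w hw; nlinarith [this]
      have h2 : dist (f w) (f D) ^ 2 + dist (g w) (g D) ^ 2 = (D - w) ^ 2 := by
        have := h w hw D hDm; nlinarith [this]
      set A := dist (f 0) (f w) with hA
      set A' := dist (f w) (f D) with hA'
      set B := dist (g 0) (g w) with hB
      set B' := dist (g w) (g D) with hB'
      have htA : L ≤ A + A' := by rw [hL, hA, hA']; exact dist_triangle _ (f w) _
      have htB : L' ≤ B + B' := by rw [hL', hB, hB']; exact dist_triangle _ (g w) _
      have hAnn : 0 ≤ A := dist_nonneg
      have hA'nn : 0 ≤ A' := dist_nonneg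
      have hBnn : 0 ≤ B := dist_nonneg
      have hB'nn : 0 ≤ B' := dist_nonneg
      have hwnn : 0 ≤ w := hw.1
      have hwD : w ≤ D := hw.2
      clear_value A A' B B'
      -- Cauchy–Schwarz
      have hcse : (A * A' + B * B') ^ 2 = (w * (D - w)) ^ 2 - (A * B' - A' * B) ^ 2 := by
        linear_combination (A' ^ 2 + B' ^ 2) * h1 + w ^ 2 * h2
      have hcs2 : (A * A' + B * B') ^ 2 ≤ (w * (D - w)) ^ 2 := by
        linarith [sq_nonneg (A * B' - A' * B)]
      have hcs : A * A' + B * B' ≤ w * (D - w) := by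
        rw [← Real.sqrt_sq (add_nonneg (mul_nonneg hAnn hA'nn) (mul_nonneg hBnn hB'nn)),
          ← Real.sqrt_sq (mul_nonneg hwnn (sub_nonneg.2 hwD))]
        exact Real.sqrt_le_sqrt hcs2
      have hsum : (A + A') ^ 2 + (B + B') ^ 2 ≤ D ^ 2 := by nlinarith [h1, h2, hcs]
      have hAsq : L ^ 2 ≤ (A + A') ^ 2 := pow_le_pow_left₀ hLnn htA 2
      have hBsq : L' ^ 2 ≤ (B + B') ^ 2 := pow_le_pow_left₀ hL'nn htB 2
      have heqA2 : (A + A') ^ 2 = L ^ 2 := by linarith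
      have heqB2 : (B + B') ^ 2 = L' ^ 2 := by linarith
      have heqA : A + A' = L := by
        rw [← Real.sqrt_sq (by linarith : (0:ℝ) ≤ A + A'), heqA2, Real.sqrt_sq hLnn]
      have heqB : B + B' = L' := by
        rw [← Real.sqrt_sq (by linarith : (0:ℝ) ≤ B + B'), heqB2, Real.sqrt_sq hL'nn]
      have heqcs : A * A' + B * B' = w * (D - w) := by
        linear_combination (heqA2 + heqB2 - h1 - h2 + hLL') / 2
      have hz : (A * B' - A' * B) ^ 2 = 0 := by
        have hexp : (A * B' - A' * B) ^ 2
            = (A ^ 2 + B ^ 2) * (A' ^ 2 + B' ^ 2) - (A * A' + B * B') ^ 2 := by ring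
        rw [hexp, h1, h2, heqcs]; ring
      have hcross : A * B' = A' * B := by
        have := sq_eq_zero_iff.mp hz; linarith
      have hsA : (A * (D - w)) ^ 2 = (A' * w) ^ 2 := by
        linear_combination A' ^ 2 * h1 - A ^ 2 * h2 + (A * B' + A' * B) * hcross
      have hsB : (B * (D - w)) ^ 2 = (B' * w) ^ 2 := by
        linear_combination B' ^ 2 * h1 - B ^ 2 * h2 - (A * B' + A' * B) * hcross
      have hpropA : A * (D - w) = A' * w := by
        rw [← Real.sqrt_sq (mul_nonneg hAnn (by linarith)), hsA,
          Real.sqrt_sq (mul_nonneg hA'nn hwnn)]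
      have hpropB : B * (D - w) = B' * w := by
        rw [← Real.sqrt_sq (mul_nonneg hBnn (by linarith)), hsB,
          Real.sqrt_sq (mul_nonneg hB'nn hwnn)]
      exact ⟨by linear_combination hpropA + w * heqA,
        by linear_combination (D - w) * heqA - hpropA,
        by linear_combination hpropB + w * heqB,
        by linear_combination (D - w) * heqB - hpropB⟩
    -- Step 2: general pairs
    have main : ∀ u' ∈ Icc (0:ℝ) D, ∀ v' ∈ Icc (0:ℝ) D, u' ≤ v' →
        dist (f u') (f v') * D = (v' - u') * L := by
      intro u' hu' v' hv' huv
      obtain ⟨hu1, -, hu3, -⟩ := key u' hu'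
      obtain ⟨-, hv2, -, hv4⟩ := key v' hv'
      set E := dist (f u') (f v') with hE
      set F := dist (g u') (g v') with hF
      have hEnn : 0 ≤ E := dist_nonneg
      have hFnn : 0 ≤ F := dist_nonneg
      have hEF : E ^ 2 + F ^ 2 = (v' - u') ^ 2 := by
        have := h u' hu' v' hv'; nlinarith [this]
      have htri : L ≤ dist (f 0) (f u') + E + dist (f v') (f D) := by
        calc L ≤ dist (f 0) (f v') + dist (f v') (f D) := by
              rw [hL]; exact dist_triangle _ _ _
          _ ≤ (dist (f 0) (f u') + E) + dist (f v') (f D) := by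
              gcongr; exact dist_triangle _ _ _
      have htri' : L' ≤ dist (g 0) (g u') + F + dist (g v') (g D) := by
        calc L' ≤ dist (g 0) (g v') + dist (g v') (g D) := by
              rw [hL']; exact dist_triangle _ _ _
          _ ≤ (dist (g 0) (g u') + F) + dist (g v') (g D) := by
              gcongr; exact dist_triangle _ _ _
      clear_value E F
      have hlow : (v' - u') * L ≤ E * D := by
        have h' := mul_le_mul_of_nonneg_right htri hD
        rw [add_mul, add_mul] at h'
        linarith [hu1, hv2]
      have hlow' : (v' - u') * L' ≤ F * D := by
        have h' := mul_le_mul_of_nonneg_right htri' hD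
        rw [add_mul, add_mul] at h'
        linarith [hu3, hv4]
      have hvu : 0 ≤ v' - u' := sub_nonneg.2 huv
      have h1' : ((v' - u') * L') ^ 2 ≤ (F * D) ^ 2 :=
        pow_le_pow_left₀ (mul_nonneg hvu hL'nn) hlow' 2
      have hkey : ((v' - u') * L) ^ 2 - (E * D) ^ 2
          = (F * D) ^ 2 - ((v' - u') * L') ^ 2 := by
        linear_combination (v' - u') ^ 2 * hLL' - D ^ 2 * hEF
      have hsq : (E * D) ^ 2 ≤ ((v' - u') * L) ^ 2 := by linarith
      have hup : E * D ≤ (v' - u') * L := by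
        rw [← Real.sqrt_sq (mul_nonneg hEnn hD), ← Real.sqrt_sq (mul_nonneg hvu hLnn)]
        exact Real.sqrt_le_sqrt hsq
      linarith
    rcases le_total u v with huv | huv
    · rw [abs_sub_comm, abs_of_nonneg (sub_nonneg.2 huv)]
      exact main u hu v hv huv
    · rw [abs_of_nonneg (sub_nonneg.2 huv), dist_comm]
      exact main v hv u hu huv

lemma seg_proj_geod {Y Z : Type*} [MetricSpace Y] [MetricSpace Z]
    (f : ℝ → Y) (g : ℝ → Z) (D : ℝ) (hD : 0 ≤ D)
    (h : ∀ u ∈ Icc (0:ℝ) D, ∀ v ∈ Icc (0:ℝ) D,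
      dist (f u) (f v) ^ 2 + dist (g u) (g v) ^ 2 = (u - v) ^ 2) :
    ∃ γ : ℝ → Y, IsGeodesicSeg γ (f 0) (f D) ∧
      ∀ t : ℝ, 0 ≤ t → t ≤ 1 → γ (t * dist (f 0) (f D)) = f (t * D) := by
  have hLnn : (0:ℝ) ≤ dist (f 0) (f D) := dist_nonneg
  rcases eq_or_lt_of_le hLnn with hL0 | hLpos
  · -- degenerate: f is constant
    have hconst : ∀ w ∈ Icc (0:ℝ) D, f w = f 0 := by
      intro w hw
      have hs := seg_proj_speed f g D hD h (u := 0) (v := w) ⟨le_refl _, hD⟩ hw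
      rw [← hL0, mul_zero] at hs
      rcases eq_or_lt_of_le hD with hD0 | hDpos
      · have : w = 0 := le_antisymm (hD0 ▸ hw.2) hw.1
        rw [this]
      · have : dist (f 0) (f w) = 0 := by
          rcases mul_eq_zero.mp hs with h' | h'
          · exact h'
          · exact absurd h' (ne_of_gt hDpos)
        exact (dist_eq_zero.mp this).symm
    refine ⟨fun _ => f 0, ⟨rfl, ?_, ?_⟩, ?_⟩
    · exact (hconst D ⟨hD, le_refl _⟩).symm
    · intro s hs t ht
      rw [← hL0] at hs ht
      have hs0 : s = 0 := le_antisymm hs.2 hs.1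
      have ht0 : t = 0 := le_antisymm ht.2 ht.1
      simp [hs0, ht0]
    · intro t ht0 ht1
      exact (hconst (t * D) ⟨mul_nonneg ht0 hD, by nlinarith⟩).symm
  · -- nondegenerate
    set L : ℝ := dist (f 0) (f D) with hL
    have hLne : L ≠ 0 := ne_of_gt hLpos
    have hDpos : 0 < D := by
      rcases eq_or_lt_of_le hD with hD0 | hDpos
      · exfalso
        have h' := h 0 ⟨le_refl _, hD⟩ D ⟨hD, le_refl _⟩
        rw [← hD0] at h'
        simp only [sub_zero, zero_sub] at h'
        have hg : (0:ℝ) ≤ dist (g 0) (g 0) ^ 2 := sq_nonneg _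
        rw [← hD0] at hL
        nlinarith [h', hLpos]
      · exact hDpos
    have hDne : D ≠ 0 := ne_of_gt hDpos
    have hmem : ∀ s ∈ Icc (0:ℝ) L, s * D / L ∈ Icc (0:ℝ) D := by
      intro s hs
      constructor
      · have := hs.1
        positivity
      · rw [div_le_iff₀ hLpos]
        nlinarith [hs.1, hs.2]
    refine ⟨fun s => f (s * D / L), ⟨?_, ?_, ?_⟩, ?_⟩
    · show f (0 * D / L) = f 0
      norm_num
    · rw [← hL]
      congr 1
      field_simp
    · intro s hs t ht
      rw [← hL] at hs ht
      have hs' := hmem s hs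
      have ht' := hmem t ht
      have hsp := seg_proj_speed f g D hD h hs' ht'
      rw [← hL] at hsp
      have habs : |s * D / L - t * D / L| = |s - t| * D / L := by
        rw [show s * D / L - t * D / L = (s - t) * (D / L) by ring, abs_mul,
          abs_of_nonneg (by positivity : (0:ℝ) ≤ D / L)]
        ring
      rw [habs] at hsp
      rw [div_mul_cancel₀ _ hLne] at hsp
      exact mul_right_cancel₀ hDne hsp
    · intro t ht0 ht1
      show f (t * dist (f 0) (f D) * D / L) = f (t * D)
      rw [← hL]
      congr 1
      field_simp

lemma compDist_param {dab dac dbc : ℝ} (hab : 0 ≤ dab) (hac : 0 ≤ dac) (hbc : 0 ≤ dbc)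
    (h1 : dbc ≤ dab + dac) (h2 : dab ≤ dbc + dac) (h3 : dac ≤ dbc + dab)
    {t : ℝ} (ht0 : 0 ≤ t) :
    compDist dab dac dbc (t * dab) (t * dac) = t * dbc := by
  rcases eq_or_lt_of_le hab with h0 | habp
  · have hbceq : dbc = dac := le_antisymm (by linarith) (by linarith)
    unfold compDist
    rw [← h0, hbceq, show t * (0:ℝ) = 0 by ring,
      show (0:ℝ) ^ 2 + (t * dac) ^ 2 - 2 * 0 * (t * dac) * Real.cos (compAngle 0 dac dac)
        = (t * dac) ^ 2 by ring]
    exact Real.sqrt_sq (mul_nonneg ht0 hac)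
  · rcases eq_or_lt_of_le hac with h0' | hacp
    · have hbceq : dbc = dab := le_antisymm (by linarith) (by linarith)
      unfold compDist
      rw [← h0', hbceq, show t * (0:ℝ) = 0 by ring,
        show (t * dab) ^ 2 + (0:ℝ) ^ 2 - 2 * (t * dab) * 0 * Real.cos (compAngle dab 0 dab)
          = (t * dab) ^ 2 by ring]
      exact Real.sqrt_sq (mul_nonneg ht0 hab)
    · set x : ℝ := (dab ^ 2 + dac ^ 2 - dbc ^ 2) / (2 * dab * dac) with hx
      have hden : 0 < 2 * dab * dac := by positivity
      have hx1 : -1 ≤ x := by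
        rw [hx, le_div_iff₀ hden]
        nlinarith
      have hx2 : x ≤ 1 := by
        rw [hx, div_le_one hden]
        nlinarith
      have hcos : Real.cos (compAngle dab dac dbc) = x := by
        unfold compAngle
        rw [← hx]
        exact Real.cos_arccos hx1 hx2
      unfold compDist
      rw [hcos]
      have hne1 : dab ≠ 0 := ne_of_gt habp
      have hne2 : dac ≠ 0 := ne_of_gt hacp
      have hval : (t * dab) ^ 2 + (t * dac) ^ 2 - 2 * (t * dab) * (t * dac) * x
          = (t * dbc) ^ 2 := by
        rw [hx]
        field_simp
        ring
      rw [hval]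
      exact Real.sqrt_sq (mul_nonneg ht0 hbc)

lemma cat0_convex {X : Type*} [MetricSpace X] (hX : IsCAT0 X) {a b c : X} {α β : ℝ → X}
    (hα : IsGeodesicSeg α a b) (hβ : IsGeodesicSeg β a c) {t : ℝ} (ht0 : 0 ≤ t)
    (ht1 : t ≤ 1) :
    dist (α (t * dist a b)) (β (t * dist a c)) ≤ t * dist b c := by
  have hd1 : (0:ℝ) ≤ dist a b := dist_nonneg
  have hd2 : (0:ℝ) ≤ dist a c := dist_nonneg
  have h := hX.2 a b c α β hα hβ (t * dist a b)
    ⟨mul_nonneg ht0 hd1, by nlinarith⟩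
    (t * dist a c) ⟨mul_nonneg ht0 hd2, by nlinarith⟩
  have T1 : dist b c ≤ dist a b + dist a c := by
    rw [dist_comm a b]; exact dist_triangle b a c
  have T2 : dist a b ≤ dist b c + dist a c := by
    calc dist a b ≤ dist a c + dist c b := dist_triangle a c b
      _ = dist b c + dist a c := by rw [dist_comm c b]; ring
  have T3 : dist a c ≤ dist b c + dist a b := by
    calc dist a c ≤ dist a b + dist b c := dist_triangle a b c
      _ = dist b c + dist a b := by ring
  rwa [compDist_param hd1 hd2 dist_nonneg T1 T2 T3 ht0] at h

end Auxiliary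

/-- Let `Y`, `Z` be CAT(0) spaces and give `Y × Z` the ℓ² product metric
(`WithLp 2 (Y × Z)`). If a geodesic triangle `(a,b,c)` in the product satisfies the
flatness condition — for each `t ∈ (0,1)`, the points `e = α (t·d(a,b))` on `[a,b]`
and `f = β (t·d(a,c))` on `[a,c]` satisfy `d(e,f) = t·d(b,c)` — then the projected
triangles in `Y` and in `Z` satisfy it as well; in particular
`d(e_i, f_i) = t·d(b_i, c_i)` for `i = 1, 2`. -/

theorem flat_triangle_in_product_projects_flat
    {Y Z : Type*} [MetricSpace Y] [MetricSpace Z]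
    (hY : IsCAT0 Y) (hZ : IsCAT0 Z)
    (a b c : WithLp 2 (Y × Z)) (α β : ℝ → WithLp 2 (Y × Z))
    (hα : IsGeodesicSeg α a b) (hβ : IsGeodesicSeg β a c)
    (hflat : ∀ t ∈ Set.Ioo (0 : ℝ) 1,
      dist (α (t * dist a b)) (β (t * dist a c)) = t * dist b c) :
    ∀ t ∈ Set.Ioo (0 : ℝ) 1,
      dist (α (t * dist a b)).ofLp.1 (β (t * dist a c)).ofLp.1 = t * dist b.ofLp.1 c.ofLp.1 ∧
      dist (α (t * dist a b)).ofLp.2 (β (t * dist a c)).ofLp.2 = t * dist b.ofLp.2 c.ofLp.2 := by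
  intro t ht
  obtain ⟨ht0, ht1⟩ := ht
  have ht0' : (0:ℝ) ≤ t := le_of_lt ht0
  have ht1' : t ≤ 1 := le_of_lt ht1
  have hDab : (0:ℝ) ≤ dist a b := dist_nonneg
  have hDac : (0:ℝ) ≤ dist a c := dist_nonneg
  -- squared decomposition along α and β
  have hα2 : ∀ u ∈ Icc (0:ℝ) (dist a b), ∀ v ∈ Icc (0:ℝ) (dist a b),
      dist (α u).ofLp.1 (α v).ofLp.1 ^ 2 + dist (α u).ofLp.2 (α v).ofLp.2 ^ 2 = (u - v) ^ 2 := by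
    intro u hu v hv
    have hd := prod_dist_sq (α u) (α v)
    rw [hα.2.2 u hu v hv] at hd
    rw [← hd, sq_abs]
  have hα2' : ∀ u ∈ Icc (0:ℝ) (dist a b), ∀ v ∈ Icc (0:ℝ) (dist a b),
      dist (α u).ofLp.2 (α v).ofLp.2 ^ 2 + dist (α u).ofLp.1 (α v).ofLp.1 ^ 2 = (u - v) ^ 2 := by
    intro u hu v hv
    linarith [hα2 u hu v hv]
  have hβ2 : ∀ u ∈ Icc (0:ℝ) (dist a c), ∀ v ∈ Icc (0:ℝ) (dist a c),
      dist (β u).ofLp.1 (β v).ofLp.1 ^ 2 + dist (β u).ofLp.2 (β v).ofLp.2 ^ 2 = (u - v) ^ 2 := by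
    intro u hu v hv
    have hd := prod_dist_sq (β u) (β v)
    rw [hβ.2.2 u hu v hv] at hd
    rw [← hd, sq_abs]
  have hβ2' : ∀ u ∈ Icc (0:ℝ) (dist a c), ∀ v ∈ Icc (0:ℝ) (dist a c),
      dist (β u).ofLp.2 (β v).ofLp.2 ^ 2 + dist (β u).ofLp.1 (β v).ofLp.1 ^ 2 = (u - v) ^ 2 := by
    intro u hu v hv
    linarith [hβ2 u hu v hv]
  -- projected geodesics
  obtain ⟨γab, hγab, hγabpt⟩ :=
    seg_proj_geod (fun s => (α s).ofLp.1) (fun s => (α s).ofLp.2) (dist a b) hDab hα2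
  obtain ⟨γab2, hγab2, hγab2pt⟩ :=
    seg_proj_geod (fun s => (α s).ofLp.2) (fun s => (α s).ofLp.1) (dist a b) hDab hα2'
  obtain ⟨γac, hγac, hγacpt⟩ :=
    seg_proj_geod (fun s => (β s).ofLp.1) (fun s => (β s).ofLp.2) (dist a c) hDac hβ2
  obtain ⟨γac2, hγac2, hγac2pt⟩ :=
    seg_proj_geod (fun s => (β s).ofLp.2) (fun s => (β s).ofLp.1) (dist a c) hDac hβ2'
  simp only [hα.1, hα.2.1] at hγab hγabpt hγab2 hγab2pt
  simp only [hβ.1, hβ.2.1] at hγac hγacpt hγac2 hγac2pt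
  -- CAT(0) convexity in each factor
  have hx : dist (α (t * dist a b)).ofLp.1 (β (t * dist a c)).ofLp.1 ≤ t * dist b.ofLp.1 c.ofLp.1 := by
    have h := cat0_convex hY hγab hγac ht0' ht1'
    rwa [hγabpt t ht0' ht1', hγacpt t ht0' ht1'] at h
  have hy : dist (α (t * dist a b)).ofLp.2 (β (t * dist a c)).ofLp.2 ≤ t * dist b.ofLp.2 c.ofLp.2 := by
    have h := cat0_convex hZ hγab2 hγac2 ht0' ht1'
    rwa [hγab2pt t ht0' ht1', hγac2pt t ht0' ht1'] at h
  -- sum of squares is exactly the flat value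
  set x := dist (α (t * dist a b)).ofLp.1 (β (t * dist a c)).ofLp.1 with hxdef
  set y := dist (α (t * dist a b)).ofLp.2 (β (t * dist a c)).ofLp.2 with hydef
  have hxnn : 0 ≤ x := dist_nonneg
  have hynn : 0 ≤ y := dist_nonneg
  have hflat' := hflat t ⟨ht0, ht1⟩
  have hsum : x ^ 2 + y ^ 2 = (t * dist b.ofLp.1 c.ofLp.1) ^ 2 + (t * dist b.ofLp.2 c.ofLp.2) ^ 2 := by
    have h1 := prod_dist_sq (α (t * dist a b)) (β (t * dist a c))
    have h2 := prod_dist_sq b c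
    rw [hflat'] at h1
    rw [hxdef, hydef]
    linear_combination -h1 + t ^ 2 * h2
  have hN1 : (0:ℝ) ≤ t * dist b.ofLp.1 c.ofLp.1 := mul_nonneg ht0' dist_nonneg
  have hN2 : (0:ℝ) ≤ t * dist b.ofLp.2 c.ofLp.2 := mul_nonneg ht0' dist_nonneg
  have hy2 : y ^ 2 ≤ (t * dist b.ofLp.2 c.ofLp.2) ^ 2 := pow_le_pow_left₀ hynn hy 2
  have hx2 : x ^ 2 ≤ (t * dist b.ofLp.1 c.ofLp.1) ^ 2 := pow_le_pow_left₀ hxnn hx 2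
  have hxg : (t * dist b.ofLp.1 c.ofLp.1) ^ 2 ≤ x ^ 2 := by linarith
  have hyg : (t * dist b.ofLp.2 c.ofLp.2) ^ 2 ≤ y ^ 2 := by linarith
  constructor
  · have : t * dist b.ofLp.1 c.ofLp.1 ≤ x := by
      rw [← Real.sqrt_sq hN1, ← Real.sqrt_sq hxnn]
      exact Real.sqrt_le_sqrt hxg
    linarith
  · have : t * dist b.ofLp.2 c.ofLp.2 ≤ y := by
      rw [← Real.sqrt_sq hN2, ← Real.sqrt_sq hynn]
      exact Real.sqrt_le_sqrt hyg
    linarith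
end

section
/- Let Z be a compact Hausdorff space and G a group acting on Z by homeomorphisms as a discrete convergence group, meaning: for every sequence of distinct elements of G there is a subsequence (g_i) and points n, p ∈ Z such that g_i(x) → p uniformly on compact subsets of Z \ {n}. Suppose Ω ⊆ Z is an open G-invariant set such that for every n, p arising as above from sequences in G, n ∉ Ω and p ∉ Ω. Then the action of G on Ω is properly discontinuous: for every compact K ⊆ Ω, the set {g ∈ G : g(K) ∩ K ≠ ∅} is finite. -/
open Filter Set

/-- The sequence `(u i)` of homeomorphisms converges to the point `p` uniformly on
compact subsets of `Z \ {n}`: for every compact `K ⊆ Z \ {n}` and every neighborhood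
`U` of `p`, eventually `u i • K ⊆ U`. -/
def ConvergesTo {G Z : Type*} [Group G] [TopologicalSpace Z] [MulAction G Z]
    (u : ℕ → G) (n p : Z) : Prop :=
  ∀ K : Set Z, IsCompact K → n ∉ K →
    ∀ U ∈ nhds p, ∀ᶠ i in atTop, ∀ x ∈ K, u i • x ∈ U

/-- Let `Z` be a compact Hausdorff space and `G` a group acting on `Z` by
homeomorphisms as a discrete convergence group: every sequence of distinct elements of
`G` has a subsequence `(g_i)` with attracting/repelling points `p, n ∈ Z` such that
`g_i → p` uniformly on compact subsets of `Z \ {n}`.  If `Ω ⊆ Z` is an open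
`G`-invariant set avoiding all such points `n, p`, then `G` acts properly
discontinuously on `Ω`: for every compact `K ⊆ Ω`, the set
`{g ∈ G : g K ∩ K ≠ ∅}` is finite. -/
theorem convergence_group_properly_discontinuous
    {G Z : Type*} [Group G] [TopologicalSpace Z] [CompactSpace Z] [T2Space Z]
    [MulAction G Z] (hcont : ∀ g : G, Continuous fun z : Z => g • z)
    (hconv : ∀ u : ℕ → G, Function.Injective u →
      ∃ φ : ℕ → ℕ, StrictMono φ ∧ ∃ n p : Z, ConvergesTo (u ∘ φ) n p)
    (Ω : Set Z) (hΩopen : IsOpen Ω) (hΩinv : ∀ (g : G), ∀ x ∈ Ω, g • x ∈ Ω)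
    (hΩavoid : ∀ (u : ℕ → G) (n p : Z), Function.Injective u →
      ConvergesTo u n p → n ∉ Ω ∧ p ∉ Ω) :
    ∀ K : Set Z, IsCompact K → K ⊆ Ω →
      {g : G | ∃ x ∈ K, g • x ∈ K}.Finite := by
  intro K hK hKΩ
  by_contra hfin
  have hinf : {g : G | ∃ x ∈ K, g • x ∈ K}.Infinite := hfin
  set S := {g : G | ∃ x ∈ K, g • x ∈ K}
  let e := hinf.natEmbedding
  set u : ℕ → G := fun i => (e i : G) with hu
  have huinj : Function.Injective u := Subtype.val_injective.comp e.injective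
  obtain ⟨φ, hφ, n, p, hc⟩ := hconv u huinj
  obtain ⟨hnΩ, hpΩ⟩ := hΩavoid (u ∘ φ) n p (huinj.comp hφ.injective) hc
  have hKcl : IsClosed K := hK.isClosed
  have hpK : p ∉ K := fun h => hpΩ (hKΩ h)
  have hnK : n ∉ K := fun h => hnΩ (hKΩ h)
  have hU : Kᶜ ∈ nhds p := hKcl.isOpen_compl.mem_nhds hpK
  obtain ⟨i, hi⟩ := (hc K hK hnK Kᶜ hU).exists
  obtain ⟨x, hxK, hx⟩ := (e (φ i)).2
  exact hi x hxK hx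
end

section
/- Let X be a complete CAT(0) space, v ∈ ∂X, R a geodesic ray from a point y to v, and b_R the Busemann function of R. Let H = b_R^{-1}((−∞,−1]) be a horoball centered at v. Then every boundary point w ∈ ∂X lying in the closure of H (in X ∪ ∂X with the cone topology) satisfies ∠(v,w) ≤ π/2; equivalently, H̄ ∩ ∂X ⊆ B̄_T(v, π/2). -/
open Filter Set

/-- Let `X` be a complete CAT(0) space, `R` a unit-speed geodesic ray
(from `y = R 0` to `v = R(∞) ∈ ∂X`), `b` its Busemann function, and
`H = b⁻¹((-∞,-1])` the corresponding horoball centered at `v`.  If `w ∈ ∂X` lies in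
the closure of `H` in the cone topology — i.e. `w` is represented by a unit-speed
ray `S` from `y` which is the limit, uniformly on compacta, of geodesics from `y` to
points `x k ∈ H` with `dist y (x k) → ∞` — then `∠(v,w) ≤ π/2`: every comparison
angle `∠̄_y(R s, S t)` is at most `π/2` (equivalently,
`H̄ ∩ ∂X ⊆ B̄_T(v, π/2)`). -/
theorem horoball_boundary_in_half_tits_ball
    {X : Type*} [MetricSpace X] [CompleteSpace X] (hX : IsCAT0 X)
    (R : ℝ → X) (hR : ∀ s t : ℝ, 0 ≤ s → 0 ≤ t → dist (R s) (R t) = |s - t|)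
    (b : X → ℝ)
    (hb : ∀ x : X, Tendsto (fun t : ℝ => dist x (R t) - t) atTop (nhds (b x)))
    (S : ℝ → X) (hS0 : S 0 = R 0)
    (hS : ∀ s t : ℝ, 0 ≤ s → 0 ≤ t → dist (S s) (S t) = |s - t|)
    (x : ℕ → X) (hxH : ∀ k, b (x k) ≤ -1)
    (γ : ℕ → ℝ → X) (hγ : ∀ k, IsGeodesicSeg (γ k) (R 0) (x k))
    (hfar : Tendsto (fun k => dist (R 0) (x k)) atTop atTop)
    (hconv : ∀ t : ℝ, 0 ≤ t → Tendsto (fun k => γ k t) atTop (nhds (S t))) :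
    ∀ s t : ℝ, 0 < s → 0 < t →
      compAngle s t (dist (R s) (S t)) ≤ Real.pi / 2 := by
  intro s t hs ht
  have key : dist (R s) (S t) ≤ Real.sqrt (s ^ 2 + t ^ 2) := by
    have hlim : Tendsto (fun k => dist (R s) (γ k t)) atTop (nhds (dist (R s) (S t))) :=
      Tendsto.dist tendsto_const_nhds (hconv t ht.le)
    refine le_of_tendsto hlim ?_
    filter_upwards [hfar.eventually_ge_atTop t] with k hkt
    set d := dist (R 0) (x k) with hd
    -- choose a large parameter u on the ray R
    have h1 : ∀ᶠ u in atTop, dist (x k) (R u) - u < 0 :=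
      (hb (x k)).eventually_lt_const (by linarith [hxH k])
    obtain ⟨u, hu1, hu2⟩ := (h1.and (eventually_ge_atTop (max 0 s))).exists
    have hu0 : (0 : ℝ) ≤ u := le_trans (le_max_left 0 s) hu2
    have hus : s ≤ u := le_trans (le_max_right 0 s) hu2
    have hdu : dist (R 0) (R u) = u := by
      rw [hR 0 u le_rfl hu0]
      simp [abs_of_nonneg hu0]
    have hα : IsGeodesicSeg R (R 0) (R u) := by
      refine ⟨rfl, by rw [hdu], ?_⟩
      intro a ha b' hb'
      rw [hdu] at ha hb'
      exact hR a b' ha.1 hb'.1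
    have hcomp := hX.2 (R 0) (R u) (x k) R (γ k) hα (hγ k) s
      ⟨hs.le, by rw [hdu]; exact hus⟩ t ⟨ht.le, hkt⟩
    rw [hdu] at hcomp
    set c := dist (R u) (x k) with hc
    have hd0 : 0 < d := lt_of_lt_of_le ht hkt
    have hu0' : 0 < u := lt_of_lt_of_le hs hus
    have hcle : c ≤ u := by
      have : dist (x k) (R u) ≤ u := by linarith [hu1]
      rw [hc, dist_comm]; exact this
    have hc0 : 0 ≤ c := dist_nonneg
    have htri1 : d ≤ u + c := by
      calc d ≤ dist (R 0) (R u) + dist (R u) (x k) := dist_triangle _ _ _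
        _ = u + c := by rw [hdu]
    have htri2 : u ≤ d + c := by
      have := dist_triangle (R 0) (x k) (R u)
      rw [dist_comm (x k) (R u)] at this
      rw [← hdu]; exact this
    set q := (u ^ 2 + d ^ 2 - c ^ 2) / (2 * u * d) with hqdef
    have hq0 : 0 ≤ q := by
      apply div_nonneg _ (by positivity)
      nlinarith
    have hq1 : q ≤ 1 := by
      rw [div_le_one (by positivity)]
      nlinarith
    have hcos : Real.cos (compAngle u d c) = q := by
      rw [compAngle, Real.cos_arccos (by linarith) hq1]
    calc dist (R s) (γ k t) ≤ compDist u d c s t := hcomp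
      _ = Real.sqrt (s ^ 2 + t ^ 2 - 2 * s * t * q) := by rw [compDist, hcos]
      _ ≤ Real.sqrt (s ^ 2 + t ^ 2) := by
          apply Real.sqrt_le_sqrt
          nlinarith [mul_nonneg (mul_nonneg hs.le ht.le) hq0]
  -- conclude
  have hsq : dist (R s) (S t) ^ 2 ≤ s ^ 2 + t ^ 2 := by
    nlinarith [Real.sq_sqrt (show (0 : ℝ) ≤ s ^ 2 + t ^ 2 by positivity),
      dist_nonneg (x := R s) (y := S t), Real.sqrt_nonneg (s ^ 2 + t ^ 2)]
  rw [compAngle, Real.arccos_le_pi_div_two]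
  apply div_nonneg _ (by positivity)
  linarith
end
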